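/- (Unique-decomposition Theorem) A finite atomistic lattice is distributive if and only if it is uniquely atomistic. -/
import Mathlib


/-- Unique-decomposition Theorem: A finite atomistic lattice is
distributive if and only if it is uniquely atomistic. -/
theorem distributive_iff_uniquelyAtomistic
    {α : Type*} [Lattice α] [OrderBot α] [Fintype α]
    (hatomistic : ∀ x : α, ∃ S : Finset α, (∀ a ∈ S, IsAtom a) ∧ x = S.sup id) :
    (∀ x y z : α, x ⊔ (y ⊓ z) = (x ⊔ y) ⊓ (x ⊔ z)) ↔
      (∀ x : α, ∃! S : Finset α, (∀ a ∈ S, IsAtom a) ∧ x = S.sup id) := by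
  classical
  constructor
  · intro hd
    letI : DistribLattice α :=
      { (inferInstance : Lattice α) with le_sup_inf := fun x y z => (hd x y z).ge }
    have key : ∀ (T : Finset α) (c : α), IsAtom c → c ≤ T.sup id → ∃ b ∈ T, c ≤ b := by
      intro T
      induction T using Finset.induction_on with
      | empty =>
        intro c hc hle
        simp only [Finset.sup_empty, le_bot_iff] at hle
        exact absurd hle hc.1
      | @insert a s ha ih =>
        intro c hc hle
        rw [Finset.sup_insert] at hle
        have h1 : c = (c ⊓ id a) ⊔ (c ⊓ s.sup id) :=
          (inf_eq_left.mpr hle).symm.trans (inf_sup_left c (id a) (s.sup id))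
        rcases hc.le_iff.mp (inf_le_left : c ⊓ id a ≤ c) with h2 | h2
        · rcases hc.le_iff.mp (inf_le_left : c ⊓ s.sup id ≤ c) with h3 | h3
          · exfalso; apply hc.1; rw [h1, h2, h3, sup_bot_eq]
          · obtain ⟨b, hb, hcb⟩ := ih c hc (inf_eq_left.mp h3)
            exact ⟨b, Finset.mem_insert_of_mem hb, hcb⟩
        · exact ⟨a, Finset.mem_insert_self a s, inf_eq_left.mp h2⟩
    intro x
    obtain ⟨S, hS, hx⟩ := hatomistic x
    refine ⟨S, ⟨hS, hx⟩, ?_⟩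
    rintro T ⟨hT, hxT⟩
    have sub : ∀ (U V : Finset α), (∀ a ∈ U, IsAtom a) → (∀ a ∈ V, IsAtom a) →
        U.sup id ≤ V.sup id → U ⊆ V := by
      intro U V hU hV hle a haU
      have hav : (a : α) ≤ V.sup id := le_trans (Finset.le_sup (f := id) haU) hle
      obtain ⟨b, hbV, hab⟩ := key V a (hU a haU) hav
      rcases (hV b hbV).le_iff.mp hab with h | h
      · exact absurd h (hU a haU).1
      · rwa [h]
    exact Finset.Subset.antisymm (sub T S hT hS (by rw [← hxT, ← hx]))
      (sub S T hS hT (by rw [← hxT, ← hx]))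
  · intro hu x y z
    set A : α → Finset α := fun w => Finset.univ.filter (fun a => IsAtom a ∧ a ≤ w) with hA
    have memA : ∀ w a, a ∈ A w ↔ IsAtom a ∧ a ≤ w := by
      intro w a; simp [hA]
    have keyA : ∀ (w : α) (S : Finset α), (∀ a ∈ S, IsAtom a) → w = S.sup id → S = A w := by
      intro w S hS hw
      obtain ⟨S₀, _, huniq⟩ := hu w
      have hsubset : S ⊆ A w := by
        intro a haS
        exact (memA w a).mpr ⟨hS a haS, hw ▸ Finset.le_sup (f := id) haS⟩
      have hAw : (∀ a ∈ A w, IsAtom a) ∧ w = (A w).sup id := by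
        refine ⟨fun a ha => ((memA w a).mp ha).1, le_antisymm ?_ ?_⟩
        · exact hw.le.trans (Finset.sup_mono hsubset)
        · exact Finset.sup_le fun a ha => ((memA w a).mp ha).2
      rw [huniq S ⟨hS, hw⟩, huniq (A w) hAw]
    have hAsup : ∀ w, w = (A w).sup id := by
      intro w
      obtain ⟨S, ⟨hS, hw⟩, _⟩ := hu w
      rw [keyA w S hS hw] at hw
      exact hw
    have hinj : ∀ u v : α, A u = A v → u = v := by
      intro u v h; rw [hAsup u, hAsup v, h]
    have hjoin : ∀ u v : α, A (u ⊔ v) = A u ∪ A v := by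
      intro u v
      refine (keyA (u ⊔ v) (A u ∪ A v) ?_ ?_).symm
      · intro a ha
        rcases Finset.mem_union.mp ha with h | h
        exacts [((memA u a).mp h).1, ((memA v a).mp h).1]
      · rw [Finset.sup_union, ← hAsup, ← hAsup]
    have hmeet : ∀ u v : α, A (u ⊓ v) = A u ∩ A v := by
      intro u v
      ext a
      simp only [memA, Finset.mem_inter]
      constructor
      · rintro ⟨ha, hle⟩
        exact ⟨⟨ha, hle.trans inf_le_left⟩, ha, hle.trans inf_le_right⟩
      · rintro ⟨⟨ha, h1⟩, _, h2⟩
        exact ⟨ha, le_inf h1 h2⟩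
    apply hinj
    rw [hjoin, hmeet, hmeet, hjoin, hjoin, Finset.union_inter_distrib_left]
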